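/- Let d ≥ 2, 𝒴 a finite set, and W : Fin d → 𝒴 → ℝ a channel with all entries strictly positive and rows probability vectors. At the uniform point θ = (1/d,…,1/d), let q(y) = (1/d)∑_x W(y|x), T = {u ∈ ℝ^d : ∑ u_x = 0}, P_T = I − (1/d)𝟙𝟙ᵀ, and I(V) = n·P_T·V·diag(q_V)^{-1}·Vᵀ·P_T the Fisher matrix on T of a channel V at the uniform point. Let W̄ be the symmetrized channel W̄((π,y)|x) = W(y|π^{-1}x)/d! on (permutations of Fin d) × 𝒴. Then: (i) I(W̄) = (tr_T I(W)/(d−1))·P_T; and (ii) if I(W) is positive definite on T, then tr_T(I(W̄)^{-1}) ≤ tr_T(I(W)^{-1}). -/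

import Mathlib

open Finset BigOperators Matrix

/-- The uniform-point Fisher matrix on the sum-zero subspace of a channel
`V : Fin d → Z → ℝ`: `I(V) = n · P_T · V · diag(q_V)⁻¹ · Vᵀ · P_T` where
`q_V(z) = (1/d)∑ₓ V(z|x)` and `P_T = I − (1/d)𝟙𝟙ᵀ`. -/
noncomputable def fisherUnif (d n : ℕ) {Z : Type*} [Fintype Z] (V : Fin d → Z → ℝ) :
    Matrix (Fin d) (Fin d) ℝ :=
  (n : ℝ) • ((1 - (d : ℝ)⁻¹ • (Matrix.of fun _ _ => (1 : ℝ))) *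
      Matrix.of (fun x x' => ∑ z, V x z * V x' z / ((1 / (d : ℝ)) * ∑ u, V u z)) *
      (1 - (d : ℝ)⁻¹ • (Matrix.of fun _ _ => (1 : ℝ))))

noncomputable def Jm (d : ℕ) : Matrix (Fin d) (Fin d) ℝ := Matrix.of fun _ _ => (1:ℝ)
noncomputable def Pm (d : ℕ) : Matrix (Fin d) (Fin d) ℝ := 1 - (d : ℝ)⁻¹ • Jm d

lemma Jm_mul_Jm (d : ℕ) : Jm d * Jm d = (d:ℝ) • Jm d := by
  ext i j; simp [Jm, Matrix.mul_apply, Matrix.smul_apply]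

lemma Pm_mul_Jm (d : ℕ) (hd : (d:ℝ) ≠ 0) : Pm d * Jm d = 0 := by
  rw [Pm, Matrix.sub_mul, one_mul, Matrix.smul_mul, Jm_mul_Jm, smul_smul,
    inv_mul_cancel₀ hd, one_smul, sub_self]

lemma Pm_mul_Pm (d : ℕ) (hd : (d:ℝ) ≠ 0) : Pm d * Pm d = Pm d := by
  conv_lhs => rw [show Pm d * Pm d = Pm d * (1 - (d : ℝ)⁻¹ • Jm d) from rfl]
  rw [Matrix.mul_sub, mul_one, Matrix.mul_smul, Pm_mul_Jm d hd, smul_zero, sub_zero]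

lemma Pm_transpose (d : ℕ) : (Pm d)ᵀ = Pm d := by
  rw [Pm, Matrix.transpose_sub, Matrix.transpose_one, Matrix.transpose_smul]
  have : (Jm d)ᵀ = Jm d := by ext i j; simp [Jm]
  rw [this]

lemma trace_Jm (d : ℕ) : Matrix.trace (Jm d) = (d:ℝ) := by
  simp [Jm, Matrix.trace, Matrix.diag]

lemma trace_Pm (d : ℕ) (hd : (d:ℝ) ≠ 0) : Matrix.trace (Pm d) = (d:ℝ) - 1 := by
  rw [Pm, Matrix.trace_sub, Matrix.trace_one, Matrix.trace_smul, trace_Jm, smul_eq_mul,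
    inv_mul_cancel₀ hd]
  simp

lemma Pm_conj (d : ℕ) (hd : (d:ℝ) ≠ 0) (c s : ℝ) :
    Pm d * (c • 1 + s • Jm d) * Pm d = c • Pm d := by
  rw [Matrix.mul_add, Matrix.mul_smul, Matrix.mul_smul, Pm_mul_Jm d hd, smul_zero, add_zero,
    mul_one, Matrix.smul_mul, Pm_mul_Pm d hd]

lemma perm_sum_shift {d : ℕ} (M : Matrix (Fin d) (Fin d) ℝ) (τ : Equiv.Perm (Fin d))
    (x x' : Fin d) :
    (∑ π : Equiv.Perm (Fin d), M (π⁻¹ (τ x)) (π⁻¹ (τ x')))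
      = ∑ π : Equiv.Perm (Fin d), M (π⁻¹ x) (π⁻¹ x') := by
  refine (Fintype.sum_equiv (Equiv.mulLeft τ)
    (fun ρ => M (ρ⁻¹ x) (ρ⁻¹ x')) (fun π => M (π⁻¹ (τ x)) (π⁻¹ (τ x'))) ?_).symm
  intro ρ
  simp [_root_.mul_inv_rev, Equiv.Perm.mul_apply]

lemma exists_perm_pair {d : ℕ} (a b c e : Fin d) (hab : a ≠ b) (hce : c ≠ e) :
    ∃ τ : Equiv.Perm (Fin d), τ a = c ∧ τ b = e := by
  refine ⟨Equiv.swap (Equiv.swap a c b) e * Equiv.swap a c, ?_, ?_⟩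
  · have h1 : Equiv.swap a c a = c := Equiv.swap_apply_left a c
    have h2 : c ≠ Equiv.swap a c b := fun h => hab (Equiv.injective _ (h1.trans h))
    simp [Equiv.Perm.mul_apply, h1, Equiv.swap_apply_of_ne_of_ne h2 hce]
  · simp [Equiv.Perm.mul_apply, Equiv.swap_apply_left]

lemma part_one (d n : ℕ) (hd : 2 ≤ d)
    (Y : Type) [Fintype Y]
    (W : Fin d → Y → ℝ) (hpos : ∀ x y, 0 < W x y)
    (Wbar : Fin d → (Equiv.Perm (Fin d) × Y) → ℝ)
    (hWbar : ∀ x π y, Wbar x (π, y) = W (π⁻¹ x) y / (Nat.factorial d : ℝ)) :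
    fisherUnif d n Wbar
      = (Matrix.trace (fisherUnif d n W) / ((d : ℝ) - 1)) • Pm d := by
  have hd2 : (2:ℝ) ≤ (d:ℝ) := by exact_mod_cast hd
  have hd0 : (d:ℝ) ≠ 0 := by linarith
  have hd1 : (d:ℝ) - 1 ≠ 0 := by intro h; linarith [sub_eq_zero.mp h]
  have hF0 : ((Nat.factorial d : ℕ):ℝ) ≠ 0 := Nat.cast_ne_zero.mpr (Nat.factorial_ne_zero d)
  set F : ℝ := (Nat.factorial d : ℝ) with hF
  set M : Matrix (Fin d) (Fin d) ℝ :=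
    Matrix.of (fun x x' => ∑ y, W x y * W x' y / ((1 / (d : ℝ)) * ∑ u, W u y)) with hM
  set Q : Fin d → Fin d → ℝ :=
    fun x x' => ∑ π : Equiv.Perm (Fin d), M (π⁻¹ x) (π⁻¹ x') with hQ
  obtain ⟨x0, x1, hx01⟩ : ∃ a b : Fin d, a ≠ b :=
    ⟨⟨0, by omega⟩, ⟨1, by omega⟩, by simp [Fin.ext_iff]⟩
  -- diagonal entries of Q are constant
  have hQdiag : ∀ x : Fin d, Q x x = Q x0 x0 := by
    intro x
    have hτ : Equiv.swap x0 x x0 = x := Equiv.swap_apply_left x0 x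
    calc Q x x = Q (Equiv.swap x0 x x0) (Equiv.swap x0 x x0) := by rw [hτ]
    _ = Q x0 x0 := perm_sum_shift M (Equiv.swap x0 x) x0 x0
  -- off-diagonal entries of Q are constant
  have hQoff : ∀ x x' : Fin d, x ≠ x' → Q x x' = Q x0 x1 := by
    intro x x' hne
    obtain ⟨τ, hτ0, hτ1⟩ := exists_perm_pair x0 x1 x x' hx01 hne
    calc Q x x' = Q (τ x0) (τ x1) := by rw [hτ0, hτ1]
    _ = Q x0 x1 := perm_sum_shift M τ x0 x1
  -- trace of M and total sum of M
  set trM : ℝ := Matrix.trace M with htrM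
  set St : ℝ := ∑ x : Fin d, ∑ x' : Fin d, M x x' with hSt
  -- diagonal count
  have hC : (d:ℝ) * Q x0 x0 = F * trM := by
    have h1 : ∑ x : Fin d, Q x x = F * trM := by
      rw [hQ]
      rw [Finset.sum_comm]
      have : ∀ π : Equiv.Perm (Fin d), ∑ x : Fin d, M (π⁻¹ x) (π⁻¹ x) = trM := by
        intro π
        rw [htrM]
        rw [show Matrix.trace M = ∑ u : Fin d, M u u from by simp [Matrix.trace, Matrix.diag]]
        exact Equiv.sum_comp (π⁻¹ : Equiv.Perm (Fin d)) (fun u => M u u)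
      rw [Finset.sum_congr rfl (fun π _ => this π), Finset.sum_const, Finset.card_univ,
        Fintype.card_perm, Fintype.card_fin, nsmul_eq_mul, hF]
    have h2 : ∑ x : Fin d, Q x x = (d:ℝ) * Q x0 x0 := by
      rw [Finset.sum_congr rfl (fun x _ => hQdiag x), Finset.sum_const, Finset.card_univ,
        Fintype.card_fin, nsmul_eq_mul]
    rw [← h2, h1]
  -- full count
  have hD : (d:ℝ) * ((d:ℝ) - 1) * Q x0 x1 = F * (St - trM) := by
    have h1 : ∑ x : Fin d, ∑ x' : Fin d, Q x x' = F * St := by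
      have hswap : ∑ x : Fin d, ∑ x' : Fin d, Q x x'
          = ∑ π : Equiv.Perm (Fin d), ∑ x : Fin d, ∑ x' : Fin d, M (π⁻¹ x) (π⁻¹ x') := by
        rw [hQ]
        calc ∑ x : Fin d, ∑ x' : Fin d, ∑ π : Equiv.Perm (Fin d), M (π⁻¹ x) (π⁻¹ x')
            = ∑ x : Fin d, ∑ π : Equiv.Perm (Fin d), ∑ x' : Fin d, M (π⁻¹ x) (π⁻¹ x') :=
              Finset.sum_congr rfl (fun x _ => Finset.sum_comm)
          _ = ∑ π : Equiv.Perm (Fin d), ∑ x : Fin d, ∑ x' : Fin d, M (π⁻¹ x) (π⁻¹ x') :=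
              Finset.sum_comm
      have hper : ∀ π : Equiv.Perm (Fin d),
          ∑ x : Fin d, ∑ x' : Fin d, M (π⁻¹ x) (π⁻¹ x') = St := by
        intro π
        rw [hSt]
        calc ∑ x : Fin d, ∑ x' : Fin d, M (π⁻¹ x) (π⁻¹ x')
            = ∑ u : Fin d, ∑ x' : Fin d, M u (π⁻¹ x') :=
              Equiv.sum_comp (π⁻¹ : Equiv.Perm (Fin d)) (fun u => ∑ x' : Fin d, M u (π⁻¹ x'))
          _ = ∑ u : Fin d, ∑ v : Fin d, M u v :=
              Finset.sum_congr rfl (fun u _ =>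
                Equiv.sum_comp (π⁻¹ : Equiv.Perm (Fin d)) (fun v => M u v))
      rw [hswap, Finset.sum_congr rfl (fun π _ => hper π), Finset.sum_const, Finset.card_univ,
        Fintype.card_perm, Fintype.card_fin, nsmul_eq_mul, hF]
    have h2 : ∑ x : Fin d, ∑ x' : Fin d, Q x x'
        = (d:ℝ) * Q x0 x0 + (d:ℝ) * ((d:ℝ) - 1) * Q x0 x1 := by
      have hrow : ∀ x : Fin d, ∑ x' : Fin d, Q x x'
          = Q x0 x0 + ((d:ℝ) - 1) * Q x0 x1 := by
        intro x
        rw [← Finset.add_sum_erase Finset.univ (fun x' => Q x x') (Finset.mem_univ x)]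
        congr 1
        · exact hQdiag x
        · rw [Finset.sum_congr rfl
            (fun x' hx' => hQoff x x' (Ne.symm (Finset.ne_of_mem_erase hx'))),
            Finset.sum_const, Finset.card_erase_of_mem (Finset.mem_univ x), Finset.card_univ,
            Fintype.card_fin, nsmul_eq_mul]
          congr 1
          rw [Nat.cast_sub (by omega : 1 ≤ d), Nat.cast_one]
      rw [Finset.sum_congr rfl (fun x _ => hrow x), Finset.sum_const, Finset.card_univ,
        Fintype.card_fin, nsmul_eq_mul]
      ring
    rw [h2, hC] at h1
    linarith
  -- the symmetrized middle matrix
  have hMbar : (Matrix.of (fun x x' => ∑ z : Equiv.Perm (Fin d) × Y,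
        Wbar x z * Wbar x' z / ((1 / (d : ℝ)) * ∑ u, Wbar u z)))
      = Matrix.of (fun x x' => Q x x' / F) := by
    ext x x'
    simp only [Matrix.of_apply]
    rw [Fintype.sum_prod_type, hQ, Finset.sum_div]
    refine Finset.sum_congr rfl (fun π _ => ?_)
    have hsum : ∀ y : Y, (∑ u : Fin d, Wbar u (π, y)) = (∑ v : Fin d, W v y) / F := by
      intro y
      simp only [hWbar]
      rw [← Finset.sum_div]
      congr 1
      exact Equiv.sum_comp (π⁻¹ : Equiv.Perm (Fin d)) (fun v => W v y)
    have hMQ : M (π⁻¹ x) (π⁻¹ x')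
        = ∑ y : Y, W (π⁻¹ x) y * W (π⁻¹ x') y / ((1 / (d : ℝ)) * ∑ u : Fin d, W u y) := by
      rw [hM]; rfl
    rw [hMQ, Finset.sum_div]
    refine Finset.sum_congr rfl (fun y _ => ?_)
    rw [hWbar, hWbar, hsum y]
    have hS : (0:ℝ) < ∑ v : Fin d, W v y :=
      Finset.sum_pos (fun v _ => hpos v y) ⟨x0, Finset.mem_univ x0⟩
    field_simp
  -- put Mbar into the form c • 1 + s • J
  set t : ℝ := Q x0 x0 / F with ht
  set s : ℝ := Q x0 x1 / F with hs
  have hMbar2 : (Matrix.of (fun x x' => Q x x' / F) : Matrix (Fin d) (Fin d) ℝ)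
      = (t - s) • (1 : Matrix (Fin d) (Fin d) ℝ) + s • Jm d := by
    ext x x'
    by_cases h : x = x'
    · subst h
      simp only [Matrix.of_apply, Matrix.add_apply, Matrix.smul_apply, Matrix.one_apply_eq,
        Jm, smul_eq_mul, mul_one]
      rw [hQdiag x, ht]
      ring
    · simp only [Matrix.of_apply, Matrix.add_apply, Matrix.smul_apply,
        Matrix.one_apply_ne h, Jm, smul_eq_mul, mul_one, mul_zero, zero_add]
      rw [hQoff x x' h, hs]
  -- trace of fisherUnif W
  have htrA : Matrix.trace (fisherUnif d n W) = (n:ℝ) * (trM - St / (d:ℝ)) := by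
    have h0 : fisherUnif d n W = (n : ℝ) • (Pm d * M * Pm d) := rfl
    rw [h0, Matrix.trace_smul, smul_eq_mul]
    congr 1
    have h1 : Matrix.trace (Pm d * M * Pm d) = Matrix.trace (Pm d * M) := by
      rw [Matrix.trace_mul_comm (Pm d * M) (Pm d), ← mul_assoc, Pm_mul_Pm d hd0]
    have h2 : Matrix.trace (Jm d * M) = St := by
      rw [hSt]
      simp only [Matrix.trace, Matrix.diag, Matrix.mul_apply, Jm, Matrix.of_apply, one_mul]
      exact Finset.sum_comm
    rw [h1, Pm, Matrix.sub_mul, one_mul, Matrix.trace_sub, Matrix.smul_mul, Matrix.trace_smul,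
      h2, smul_eq_mul, htrM]
    field_simp
  -- conclude
  have hfbar : fisherUnif d n Wbar = ((n:ℝ) * (t - s)) • Pm d := by
    have h0 : fisherUnif d n Wbar
        = (n : ℝ) • (Pm d * (Matrix.of (fun x x' => ∑ z : Equiv.Perm (Fin d) × Y,
            Wbar x z * Wbar x' z / ((1 / (d : ℝ)) * ∑ u, Wbar u z))) * Pm d) := rfl
    rw [h0, hMbar, hMbar2, Pm_conj d hd0, smul_smul]
  rw [hfbar, htrA]
  congr 1
  rw [ht, hs]
  field_simp
  ring_nf
  linear_combination ((d:ℝ)-1) * (n:ℝ) * hC - (n:ℝ) * hD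

lemma trace_cs {d : ℕ} (X Y : Matrix (Fin d) (Fin d) ℝ) :
    (Matrix.trace (Xᵀ * Y))^2 ≤ Matrix.trace (Xᵀ * X) * Matrix.trace (Yᵀ * Y) := by
  have key : ∀ U V : Matrix (Fin d) (Fin d) ℝ,
      Matrix.trace (Uᵀ * V) = ∑ p : Fin d × Fin d, U p.1 p.2 * V p.1 p.2 := by
    intro U V
    rw [Fintype.sum_prod_type]
    simp only [Matrix.trace, Matrix.diag, Matrix.mul_apply, Matrix.transpose_apply]
    rw [Finset.sum_comm]
  rw [key, key, key]
  have := Finset.sum_mul_sq_le_sq_mul_sq Finset.univ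
    (fun p : Fin d × Fin d => X p.1 p.2) (fun p : Fin d × Fin d => Y p.1 p.2)
  simpa [pow_two] using this

lemma quad_diag {d : ℕ} (C : Matrix (Fin d) (Fin d) ℝ) (x : Fin d) :
    (fun i => Pm d x i) ⬝ᵥ C.mulVec (fun i => Pm d x i) = (Pm d * C * (Pm d)ᵀ) x x := by
  simp only [dotProduct, Matrix.mulVec, Matrix.mul_apply, Matrix.transpose_apply, dotProduct]
  simp_rw [Finset.mul_sum, Finset.sum_mul]
  rw [Finset.sum_comm]
  exact Finset.sum_congr rfl fun j _ => Finset.sum_congr rfl fun i _ => by ring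

lemma Pm_row_sum {d : ℕ} (hd0 : (d:ℝ) ≠ 0) (x : Fin d) : ∑ i, Pm d x i = 0 := by
  simp only [Pm, Jm, Matrix.sub_apply, Matrix.one_apply, Matrix.smul_apply, Matrix.of_apply,
    smul_eq_mul, mul_one, Finset.sum_sub_distrib, Finset.sum_ite_eq, Finset.mem_univ, if_true,
    Finset.sum_const, Finset.card_univ, Fintype.card_fin, nsmul_eq_mul]
  field_simp
  norm_num

lemma Pm_symm_entry {d : ℕ} (i j : Fin d) : Pm d i j = Pm d j i := by
  have := congrFun (congrFun (Pm_transpose d) i) j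
  simpa [Matrix.transpose_apply] using this.symm

/-- **Fisher symmetrization** (Theorem 9.1, eqs. (9.2)–(9.3)).  For the symmetrized
channel `W̄((π,y)|x) = W(y|π⁻¹x)/d!`: (i) `I(W̄) = (tr_T I(W)/(d−1))·P_T`; and
(ii) if `I(W)` is positive definite on the sum-zero subspace `T`, then
`tr_T(I(W̄)⁻¹) ≤ tr_T(I(W)⁻¹)`, the inverses on `T` being realised as matrices
`B` with `B·I = I·B = P_T` and `P_T·B = B·P_T = B`. -/
theorem fisher_symmetrization (d n : ℕ) (hd : 2 ≤ d) (hn : 1 ≤ n)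
    (Y : Type) [Fintype Y]
    (W : Fin d → Y → ℝ) (hpos : ∀ x y, 0 < W x y) (hrow : ∀ x, ∑ y, W x y = 1)
    (Wbar : Fin d → (Equiv.Perm (Fin d) × Y) → ℝ)
    (hWbar : ∀ x π y, Wbar x (π, y) = W (π⁻¹ x) y / (Nat.factorial d : ℝ))
    (PT : Matrix (Fin d) (Fin d) ℝ)
    (hPT : PT = 1 - (d : ℝ)⁻¹ • (Matrix.of fun _ _ => (1 : ℝ))) :
    (fisherUnif d n Wbar = (Matrix.trace (fisherUnif d n W) / ((d : ℝ) - 1)) • PT)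
    ∧ ((∀ u : Fin d → ℝ, (∑ x, u x = 0) → u ≠ 0 →
          0 < u ⬝ᵥ (fisherUnif d n W).mulVec u) →
        ∀ B B' : Matrix (Fin d) (Fin d) ℝ,
          B * fisherUnif d n Wbar = PT → fisherUnif d n Wbar * B = PT →
          PT * B = B → B * PT = B →
          B' * fisherUnif d n W = PT → fisherUnif d n W * B' = PT →
          PT * B' = B' → B' * PT = B' →
          Matrix.trace B ≤ Matrix.trace B') := by
  have hd2 : (2:ℝ) ≤ (d:ℝ) := by exact_mod_cast hd
  have hd0 : (d:ℝ) ≠ 0 := by linarith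
  have hd1 : (d:ℝ) - 1 ≠ 0 := by intro h; linarith [sub_eq_zero.mp h]
  have hPTm : PT = Pm d := by rw [hPT]; rfl
  have hpart1 : fisherUnif d n Wbar
      = (Matrix.trace (fisherUnif d n W) / ((d : ℝ) - 1)) • PT := by
    rw [hPTm]; exact part_one d n hd Y W hpos Wbar hWbar
  refine ⟨hpart1, ?_⟩
  intro hpd B B' hB1 hB2 hB3 hB4 hB'1 hB'2 hB'3 hB'4
  haveI : Nonempty (Fin d) := ⟨⟨0, by omega⟩⟩
  set A := fisherUnif d n W with hA
  set M : Matrix (Fin d) (Fin d) ℝ :=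
    Matrix.of (fun x x' => ∑ y, W x y * W x' y / ((1 / (d : ℝ)) * ∑ u, W u y)) with hM
  have hAdef : A = (n : ℝ) • (Pm d * M * Pm d) := rfl
  have hAPm : A * Pm d = A := by
    rw [hAdef, Matrix.smul_mul, mul_assoc (Pm d * M), Pm_mul_Pm d hd0]
  have hPmA : Pm d * A = A := by
    rw [hAdef, Matrix.mul_smul, ← mul_assoc, ← mul_assoc, Pm_mul_Pm d hd0, mul_assoc]
  have hMt : Mᵀ = M := by
    ext i j
    simp only [Matrix.transpose_apply, hM, Matrix.of_apply]
    exact Finset.sum_congr rfl fun y _ => by ring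
  have hAt : Aᵀ = A := by
    rw [hAdef, Matrix.transpose_smul, Matrix.transpose_mul, Matrix.transpose_mul,
      Pm_transpose, hMt, ← mul_assoc]
  -- positivity of the trace of A
  have htrApos : 0 < Matrix.trace A := by
    have hx : ∀ x : Fin d, 0 < A x x := by
      intro x
      have h1 : ∑ i, Pm d x i = 0 := Pm_row_sum hd0 x
      have h2 : (fun i => Pm d x i) ≠ 0 := by
        intro h
        have hx0 := congrFun h x
        simp only [Pm, Jm, Matrix.sub_apply, Matrix.one_apply_eq, Matrix.smul_apply,
          Matrix.of_apply, smul_eq_mul, mul_one, Pi.zero_apply] at hx0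
        have hinv : (d:ℝ)⁻¹ < 1 := by
          rw [inv_lt_one_iff₀]; right; linarith
        linarith
      have h3 := hpd (fun i => Pm d x i) h1 h2
      have h4 : (fun i => Pm d x i) ⬝ᵥ A.mulVec (fun i => Pm d x i) = A x x := by
        rw [quad_diag A x, Pm_transpose, show Pm d * A * Pm d = A from by rw [hPmA, hAPm]]
      rw [h4] at h3
      exact h3
    have htr : Matrix.trace A = ∑ x, A x x := by simp [Matrix.trace, Matrix.diag]
    rw [htr]
    exact Finset.sum_pos (fun x _ => hx x) Finset.univ_nonempty
  set c : ℝ := Matrix.trace A / ((d:ℝ) - 1) with hc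
  have hcpos : 0 < c := div_pos htrApos (by linarith)
  have hBeq : B = c⁻¹ • PT := by
    have h1 := hB1
    rw [hpart1, Matrix.mul_smul, hB4] at h1
    rw [← h1, smul_smul, inv_mul_cancel₀ (ne_of_gt hcpos), one_smul]
  have htrB : Matrix.trace B = c⁻¹ * ((d:ℝ) - 1) := by
    rw [hBeq, Matrix.trace_smul, hPTm, trace_Pm d hd0, smul_eq_mul]
  -- symmetry of B'
  have hPTt : PTᵀ = PT := by rw [hPTm, Pm_transpose]
  have hB't : B'ᵀ = B' := by
    have h1 : B'ᵀ * PT = B'ᵀ := by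
      have h := congrArg Matrix.transpose hB'3
      rwa [Matrix.transpose_mul, hPTt] at h
    have h2 : B'ᵀ * A = PT := by
      have h := congrArg Matrix.transpose hB'2
      rwa [Matrix.transpose_mul, hAt, hPTt] at h
    calc B'ᵀ = B'ᵀ * PT := h1.symm
      _ = B'ᵀ * (A * B') := by rw [hB'2]
      _ = (B'ᵀ * A) * B' := by rw [mul_assoc]
      _ = PT * B' := by rw [h2]
      _ = B' := hB'3
  -- B' is positive semidefinite
  have hB'psd : B'.PosSemidef := by
    refine Matrix.PosSemidef.of_dotProduct_mulVec_nonneg ?_ ?_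
    · show B'ᴴ = B'
      have h : B'ᴴ = B'ᵀ := by ext i j; simp [Matrix.conjTranspose_apply]
      rw [h, hB't]
    · intro u
      have hst : star u = u := by funext i; simp
      rw [hst]
      set w := B'.mulVec u with hw
      have hPTw : PT.mulVec w = w := by rw [hw, Matrix.mulVec_mulVec, hB'3]
      have hkey : w ⬝ᵥ A.mulVec w = u ⬝ᵥ w := by
        rw [hw, Matrix.mulVec_mulVec, hB'2, Matrix.dotProduct_mulVec,
          ← Matrix.mulVec_transpose, hPTt, Matrix.mulVec_mulVec, hB'3]
        exact dotProduct_comm _ u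
      by_cases hw0 : w = 0
      · rw [hw0, dotProduct_zero]
      · have hsum : ∑ i, w i = 0 := by
          calc ∑ i, w i = ∑ i, (PT.mulVec w) i := by rw [hPTw]
          _ = ∑ j, (∑ i, PT i j) * w j := by
              simp only [Matrix.mulVec, dotProduct]
              rw [Finset.sum_comm]
              exact Finset.sum_congr rfl fun j _ => by rw [Finset.sum_mul]
          _ = 0 := by
              refine Finset.sum_eq_zero fun j _ => ?_
              have hcol : ∑ i, PT i j = 0 := by
                rw [hPTm]
                calc ∑ i, Pm d i j = ∑ i, Pm d j i :=
                      Finset.sum_congr rfl fun i _ => Pm_symm_entry i j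
                  _ = 0 := Pm_row_sum hd0 j
              rw [hcol, zero_mul]
        have h := hpd w hsum hw0
        linarith [hkey]
  -- square root of B'
  open scoped MatrixOrder in
  set R := CFC.sqrt B' with hRdef
  have hRR : R * R = B' := by
    have h := CFC.sq_sqrt B' hB'psd.nonneg
    rwa [pow_two] at h
  have hRt : Rᵀ = R := by
    have h := (CFC.sqrt_nonneg B').posSemidef.1
    have h2 : Rᴴ = Rᵀ := by ext i j; simp [Matrix.conjTranspose_apply]
    rw [← h2, h]
  have hcs := trace_cs R (A * R)
  have e1 : Matrix.trace (Rᵀ * (A * R)) = (d:ℝ) - 1 := by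
    rw [hRt, Matrix.trace_mul_comm R (A * R), mul_assoc, hRR, hB'2, hPTm, trace_Pm d hd0]
  have e2 : Matrix.trace (Rᵀ * R) = Matrix.trace B' := by rw [hRt, hRR]
  have e3 : Matrix.trace ((A * R)ᵀ * (A * R)) = Matrix.trace A := by
    rw [Matrix.transpose_mul, hRt, hAt, Matrix.trace_mul_comm (R * A) (A * R)]
    have hprod : (A * R) * (R * A) = PT * A := by
      rw [mul_assoc A R (R * A), ← mul_assoc R R A, hRR, ← mul_assoc, hB'2]
    rw [hprod, Matrix.trace_mul_comm, hPTm, hAPm]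
  rw [e1, e2, e3] at hcs
  rw [htrB]
  have hfin : c⁻¹ * ((d:ℝ) - 1) = ((d:ℝ) - 1)^2 / Matrix.trace A := by
    rw [hc]
    field_simp
  rw [hfin, div_le_iff₀ htrApos]
  exact hcs
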